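/- Orthogonal eigendirections give full covert rate (Theorem 3, case θ = π/2; null-steering example): Let N_a ≥ 1 and n ≥ 1 be integers, σ_b, σ_w, λ_b, λ_w, P > 0 real numbers and δ ≥ 0, and let u_b, u_w ∈ ℂ^{N_a} be unit vectors with ⟨u_w, u_b⟩ = 0. Let W_b := λ_b • (outer product of u_b with itself) and W_w := λ_w • (outer product of u_w with itself). Then the covariance Q₀ := P • (outer product of u_b with itself) satisfies W_w * Q₀ = 0 and D(W_w, Q₀) = 0, and sSup { R(Q) : Q an N_a×N_a complex Hermitian positive semidefinite matrix with (Q.trace).re ≤ P and n·D(W_w, Q) ≤ 2δ² } = Real.log(1 + λ_b·P/σ_b²). -/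

import Mathlib

open Matrix
open scoped ComplexOrder InnerProductSpace

/-- The detection (relative-entropy) functional at Willie:
`D(W, Q) = log (det (1 + σ_w⁻² W Q)).re + ((1 + σ_w⁻² W Q)⁻¹.trace).re − N_a`. -/
noncomputable def Dfun {Na : ℕ} (σw : ℝ) (W Q : Matrix (Fin Na) (Fin Na) ℂ) : ℝ :=
  Real.log ((1 + (σw ^ 2)⁻¹ • (W * Q)).det.re)
    + (((1 + (σw ^ 2)⁻¹ • (W * Q))⁻¹).trace).re - Na

/-- The rate functional for Bob's channel: `R(Q) = log (det (1 + σ_b⁻² W_b Q)).re`. -/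
noncomputable def Rfun {Na : ℕ} (σb : ℝ) (Wb Q : Matrix (Fin Na) (Fin Na) ℂ) : ℝ :=
  Real.log ((1 + (σb ^ 2)⁻¹ • (Wb * Q)).det.re)

/-- The outer product `u uᴴ` of a vector with itself, with `(i,j)` entry `u i * conj (u j)`. -/
noncomputable def outer {Na : ℕ} (u : EuclideanSpace ℂ (Fin Na)) :
    Matrix (Fin Na) (Fin Na) ℂ :=
  Matrix.of fun i j => u i * star (u j)

variable {Na : ℕ}

lemma outer_mul (u : EuclideanSpace ℂ (Fin Na)) (M : Matrix (Fin Na) (Fin Na) ℂ) :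
    outer u * M = replicateCol Unit (fun i => u i) * replicateRow Unit ((star (u : Fin Na → ℂ)) ᵥ* M) := by
  ext i j
  simp [outer, mul_apply, vecMul, dotProduct, Finset.mul_sum, mul_assoc]

lemma det_one_add_smul_outer_mul (c : ℂ) (u : EuclideanSpace ℂ (Fin Na))
    (M : Matrix (Fin Na) (Fin Na) ℂ) :
    (1 + c • (outer u * M)).det = 1 + c * (star (u : Fin Na → ℂ) ⬝ᵥ M *ᵥ u) := by
  have h : c • (outer u * M)
      = replicateCol Unit (fun i => c * u i) * replicateRow Unit ((star (u : Fin Na → ℂ)) ᵥ* M) := by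
    rw [outer_mul]
    ext i j
    simp [mul_apply, mul_assoc]
  rw [h, det_one_add_replicateCol_mul_replicateRow, Matrix.dotProduct_mulVec]
  congr 1
  simp [dotProduct, Finset.mul_sum, mul_comm, mul_left_comm, mul_assoc]

lemma star_dot_self (u : EuclideanSpace ℂ (Fin Na)) (hu : ‖u‖ = 1) :
    star (u : Fin Na → ℂ) ⬝ᵥ (u : Fin Na → ℂ) = 1 := by
  have := EuclideanSpace.inner_eq_star_dotProduct u u
  rw [inner_self_eq_norm_sq_to_K, hu] at this
  rw [dotProduct_comm]
  simpa using this.symm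

lemma mulVec_outer (u : EuclideanSpace ℂ (Fin Na)) (x : Fin Na → ℂ) :
    outer u *ᵥ x = (star (u : Fin Na → ℂ) ⬝ᵥ x) • (u : Fin Na → ℂ) := by
  ext i
  simp [outer, mulVec, dotProduct, Finset.mul_sum, mul_comm, mul_left_comm]

lemma outer_isHermitian (u : EuclideanSpace ℂ (Fin Na)) : (outer u).IsHermitian := by
  ext i j
  simp [outer, conjTranspose_apply, mul_comm]

lemma quadform_outer (u : EuclideanSpace ℂ (Fin Na)) (x : Fin Na → ℂ) :
    star x ⬝ᵥ outer u *ᵥ x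
      = star (star (u : Fin Na → ℂ) ⬝ᵥ x) * (star (u : Fin Na → ℂ) ⬝ᵥ x) := by
  simp only [outer, mulVec, dotProduct, of_apply, Pi.star_apply, star_sum, star_mul',
    star_star, Finset.sum_mul, Finset.mul_sum]
  conv_rhs => rw [Finset.sum_comm]
  exact Finset.sum_congr rfl fun i _ => Finset.sum_congr rfl fun j _ => by ring

lemma outer_posSemidef (u : EuclideanSpace ℂ (Fin Na)) : (outer u).PosSemidef := by
  refine PosSemidef.of_dotProduct_mulVec_nonneg (outer_isHermitian u) fun x => ?_
  rw [quadform_outer]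
  exact star_mul_self_nonneg _

lemma one_sub_outer_posSemidef (u : EuclideanSpace ℂ (Fin Na)) (hu : ‖u‖ = 1) :
    (1 - outer u).PosSemidef := by
  refine PosSemidef.of_dotProduct_mulVec_nonneg ?_ ?_
  · exact (Matrix.isHermitian_one).sub (outer_isHermitian u)
  · intro x
    rw [sub_mulVec, dotProduct_sub, one_mulVec, quadform_outer]
    set x' : EuclideanSpace ℂ (Fin Na) := (WithLp.equiv 2 (Fin Na → ℂ)).symm x with hx'
    have hc : star (u : Fin Na → ℂ) ⬝ᵥ x = ⟪u, x'⟫_ℂ := by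
      rw [EuclideanSpace.inner_eq_star_dotProduct, dotProduct_comm]; rfl
    have hxx : star x ⬝ᵥ x = ((‖x'‖ ^ 2 : ℝ) : ℂ) := by
      have h2 := EuclideanSpace.inner_eq_star_dotProduct x' x'
      rw [inner_self_eq_norm_sq_to_K] at h2
      calc star x ⬝ᵥ x
          = star ((WithLp.equiv 2 (Fin Na → ℂ)) x') ⬝ᵥ (WithLp.equiv 2 (Fin Na → ℂ)) x' := rfl
        _ = (‖x'‖ : ℂ) ^ 2 := (dotProduct_comm _ _).trans h2.symm
        _ = _ := by push_cast; ring
    rw [hc, hxx]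
    have h1 : star (⟪u, x'⟫_ℂ) * ⟪u, x'⟫_ℂ = ((‖⟪u, x'⟫_ℂ‖ ^ 2 : ℝ) : ℂ) := by
      rw [Complex.star_def, mul_comm, Complex.mul_conj, Complex.normSq_eq_norm_sq]
    rw [h1, ← Complex.ofReal_sub]
    rw [Complex.zero_le_real]
    have hcs : ‖⟪u, x'⟫_ℂ‖ ≤ ‖x'‖ := by
      have := norm_inner_le_norm (𝕜 := ℂ) u x'
      rwa [hu, one_mul] at this
    nlinarith [norm_nonneg (⟪u, x'⟫_ℂ), norm_nonneg x']

lemma trace_re_nonneg_of_psd {M : Matrix (Fin Na) (Fin Na) ℂ} (hM : M.PosSemidef) :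
    0 ≤ M.trace.re := by
  have h : ∀ i, 0 ≤ (M i i).re := by
    intro i
    have := hM.re_dotProduct_nonneg (Pi.single i 1)
    simpa [dotProduct, mulVec, Pi.single_apply, Finset.mul_sum] using this
  rw [Matrix.trace, Complex.re_sum]
  exact Finset.sum_nonneg fun i _ => h i

open scoped MatrixOrder in
lemma trace_mul_re_nonneg {A B : Matrix (Fin Na) (Fin Na) ℂ} (hA : A.PosSemidef)
    (hB : B.PosSemidef) : 0 ≤ ((A * B).trace).re := by
  have hS : CFC.sqrt A * CFC.sqrt A = A :=
    CFC.sqrt_mul_sqrt_self A (Matrix.nonneg_iff_posSemidef.mpr hA)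
  have hherm : (CFC.sqrt A)ᴴ = CFC.sqrt A :=
    (Matrix.nonneg_iff_posSemidef.mp (CFC.sqrt_nonneg A)).1
  have h1 : (A * B).trace = (CFC.sqrt A * B * CFC.sqrt A).trace := by
    conv_lhs => rw [← hS]
    rw [Matrix.mul_assoc, Matrix.trace_mul_comm]
  have h2 : (CFC.sqrt A * B * CFC.sqrt A).PosSemidef := by
    have := hB.conjTranspose_mul_mul_same (CFC.sqrt A)
    rwa [hherm] at this
  rw [h1]
  exact trace_re_nonneg_of_psd h2

lemma trace_mul_outer (Q : Matrix (Fin Na) (Fin Na) ℂ) (u : EuclideanSpace ℂ (Fin Na)) :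
    (Q * outer u).trace = star (u : Fin Na → ℂ) ⬝ᵥ Q *ᵥ u := by
  simp only [Matrix.trace, Matrix.diag, mul_apply, outer, of_apply, dotProduct, mulVec,
    Pi.star_apply, Finset.mul_sum]
  exact Finset.sum_congr rfl fun i _ => Finset.sum_congr rfl fun j _ => by ring

lemma quad_re_le_trace {Q : Matrix (Fin Na) (Fin Na) ℂ} (hQ : Q.PosSemidef)
    {u : EuclideanSpace ℂ (Fin Na)} (hu : ‖u‖ = 1) :
    (star (u : Fin Na → ℂ) ⬝ᵥ Q *ᵥ u).re ≤ Q.trace.re := by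
  have hsplit : Q.trace = (Q * outer u).trace + (Q * (1 - outer u)).trace := by
    rw [← Matrix.trace_add, ← Matrix.mul_add]
    simp
  have h3 : 0 ≤ ((Q * (1 - outer u)).trace).re :=
    trace_mul_re_nonneg hQ (one_sub_outer_posSemidef u hu)
  have h4 := congrArg Complex.re hsplit
  rw [Complex.add_re, trace_mul_outer] at h4
  linarith

lemma real_smul_mat (c : ℝ) (A : Matrix (Fin Na) (Fin Na) ℂ) : c • A = (c : ℂ) • A := by
  ext i j
  simp [Complex.real_smul]

lemma Rfun_eq (σb lb : ℝ) (ub : EuclideanSpace ℂ (Fin Na)) (Q : Matrix (Fin Na) (Fin Na) ℂ) :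
    Rfun σb ((lb : ℂ) • outer ub) Q
      = Real.log ((1 + ((lb / σb ^ 2 : ℝ) : ℂ) * (star (ub : Fin Na → ℂ) ⬝ᵥ Q *ᵥ ub)).re) := by
  have hM : (1 : Matrix (Fin Na) (Fin Na) ℂ) + (σb ^ 2)⁻¹ • (((lb : ℂ) • outer ub) * Q)
      = 1 + ((lb / σb ^ 2 : ℝ) : ℂ) • (outer ub * Q) := by
    rw [smul_mul_assoc, real_smul_mat, smul_smul]
    push_cast
    ring_nf
  rw [Rfun, hM, det_one_add_smul_outer_mul]

/-- **Orthogonal eigendirections give full covert rate (Theorem 3, case θ = π/2).**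
If `⟨u_w, u_b⟩ = 0`, then the full-power covariance `Q₀ = P u_b u_bᴴ` satisfies
`W_w Q₀ = 0` and `D(W_w, Q₀) = 0`, and the `δ`-PD constrained capacity equals the
unconstrained capacity `log(1 + λ_b·P/σ_b²)`. -/
theorem orthogonal_full_covert_rate (Na n : ℕ) (hNa : 1 ≤ Na) (hn : 1 ≤ n)
    (σb σw lb lw P δ : ℝ) (hσb : 0 < σb) (hσw : 0 < σw) (hlb : 0 < lb) (hlw : 0 < lw)
    (hP : 0 < P) (hδ : 0 ≤ δ)
    (ub uw : EuclideanSpace ℂ (Fin Na)) (hub : ‖ub‖ = 1) (huw : ‖uw‖ = 1)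
    (horth : ⟪uw, ub⟫_ℂ = 0) :
    ((lw : ℂ) • outer uw) * ((P : ℂ) • outer ub) = 0 ∧
    Dfun σw ((lw : ℂ) • outer uw) ((P : ℂ) • outer ub) = 0 ∧
    sSup {r : ℝ | ∃ Q : Matrix (Fin Na) (Fin Na) ℂ, Q.PosSemidef ∧
        (Q.trace).re ≤ P ∧
        (n : ℝ) * Dfun σw ((lw : ℂ) • outer uw) Q ≤ 2 * δ ^ 2 ∧
        r = Rfun σb ((lb : ℂ) • outer ub) Q}
      = Real.log (1 + lb * P / σb ^ 2) := by
  -- orthogonality in dot-product form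
  have h0 : star (uw : Fin Na → ℂ) ⬝ᵥ (ub : Fin Na → ℂ) = 0 := by
    have h := horth
    rw [EuclideanSpace.inner_eq_star_dotProduct, dotProduct_comm] at h
    exact h
  have houter : outer uw * outer ub = 0 := by
    ext i j
    simp only [mul_apply, outer, of_apply, Matrix.zero_apply]
    calc (∑ k, uw i * star (uw k) * (ub k * star (ub j)))
        = (uw i * star (ub j)) * (star (uw : Fin Na → ℂ) ⬝ᵥ (ub : Fin Na → ℂ)) := by
          rw [dotProduct, Finset.mul_sum]
          exact Finset.sum_congr rfl fun k _ => by simp; ring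
      _ = 0 := by rw [h0, mul_zero]
  have hWQ : ((lw : ℂ) • outer uw) * ((P : ℂ) • outer ub) = 0 := by
    rw [smul_mul_assoc, mul_smul_comm, houter]
    simp
  have hD0 : Dfun σw ((lw : ℂ) • outer uw) ((P : ℂ) • outer ub) = 0 := by
    have hz : (1 : Matrix (Fin Na) (Fin Na) ℂ)
        + (σw ^ 2)⁻¹ • (((lw : ℂ) • outer uw) * ((P : ℂ) • outer ub)) = 1 := by
      rw [hWQ]; simp
    rw [Dfun, hz]
    simp [Matrix.trace_one]
  refine ⟨hWQ, hD0, ?_⟩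
  -- the quadratic form of Q₀
  have hquad0 : star (ub : Fin Na → ℂ) ⬝ᵥ ((P : ℂ) • outer ub) *ᵥ (ub : Fin Na → ℂ) = (P : ℂ) := by
    rw [smul_mulVec, dotProduct_smul, smul_eq_mul, quadform_outer,
      star_dot_self ub hub]
    simp
  have hPσ : (0:ℝ) < 1 + lb * P / σb ^ 2 := by positivity
  apply IsGreatest.csSup_eq
  constructor
  · -- Q₀ attains the value
    refine ⟨(P : ℂ) • outer ub, ?_, ?_, ?_, ?_⟩
    · refine PosSemidef.of_dotProduct_mulVec_nonneg ?_ ?_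
      · have h := outer_isHermitian ub
        ext i j
        simp only [conjTranspose_apply, Matrix.smul_apply, star_mul', smul_eq_mul]
        have := congrFun (congrFun h i) j
        simp only [conjTranspose_apply] at this
        rw [this]
        simp [mul_comm]
      · intro x
        rw [smul_mulVec, dotProduct_smul, smul_eq_mul, quadform_outer]
        exact mul_nonneg (Complex.zero_le_real.mpr hP.le) (star_mul_self_nonneg _)
    · have htr1 : (outer ub).trace = 1 := by
        rw [← star_dot_self ub hub]
        simp only [Matrix.trace, Matrix.diag, outer, of_apply, dotProduct, Pi.star_apply]
        exact Finset.sum_congr rfl fun i _ => by ring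
      rw [Matrix.trace_smul, htr1]
      simp
    · rw [hD0, mul_zero]
      positivity
    · rw [Rfun_eq, hquad0]
      have hc1 : ((lb / σb ^ 2 : ℝ) : ℂ) * (P : ℂ) = ((lb * P / σb ^ 2 : ℝ) : ℂ) := by
        push_cast; ring
      rw [hc1, ← Complex.ofReal_one, ← Complex.ofReal_add, Complex.ofReal_re]
  · -- upper bound
    rintro r ⟨Q, hQ, htr, -, rfl⟩
    rw [Rfun_eq]
    set t := star (ub : Fin Na → ℂ) ⬝ᵥ Q *ᵥ (ub : Fin Na → ℂ) with htdef
    have ht : 0 ≤ t := hQ.dotProduct_mulVec_nonneg _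
    obtain ⟨htre, htim⟩ := Complex.nonneg_iff.mp ht
    have hle : t.re ≤ P := le_trans (quad_re_le_trace hQ hub) htr
    have hre : (1 + ((lb / σb ^ 2 : ℝ) : ℂ) * t).re = 1 + (lb / σb ^ 2) * t.re := by
      rw [Complex.add_re, Complex.one_re, Complex.re_ofReal_mul]
    rw [hre]
    have hc : 0 ≤ lb / σb ^ 2 := by positivity
    apply Real.log_le_log (by positivity)
    have h5 : lb / σb ^ 2 * t.re ≤ lb / σb ^ 2 * P := mul_le_mul_of_nonneg_left hle hc
    have h6 : lb / σb ^ 2 * P = lb * P / σb ^ 2 := by ring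
    linarith
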